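/- Let B and B₀ be symmetric nonnegative k×k real matrices. Define δ_p(B, B₀) := (1/k²)·min over permutations π of [k] of ∑_{i,j ∈ [k]} (B(π(i), π(j)) − B₀(i,j))², and δ_ds(B, B₀) := min over doubly stochastic k×k matrices S of (1/k²)·∑_{a,a',b,b'} (B(a,b) − B₀(a',b'))²·S(a,a')·S(b,b'). Then δ_p(B, B₀) ≤ k⁴ · δ_ds(B, B₀). -/

import Mathlib

open Matrix

private lemma exists_good_perm (k : ℕ) (hk : 0 < k) (S : Matrix (Fin k) (Fin k) ℝ)
    (h0 : ∀ a b, 0 ≤ S a b) (hrow : ∀ a, ∑ b, S a b = 1) (hcol : ∀ b, ∑ a, S a b = 1) :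
    ∃ σ : Equiv.Perm (Fin k), ∀ a, 1 / (k : ℝ) ^ 2 ≤ S a (σ a) := by
  classical
  have hkR : (0 : ℝ) < (k : ℝ) := by exact_mod_cast hk
  have hk2 : (0 : ℝ) < (k : ℝ) ^ 2 := by positivity
  set t : Fin k → Finset (Fin k) :=
    fun a => Finset.univ.filter (fun a' => 1 / (k : ℝ) ^ 2 ≤ S a a') with ht
  have hall : ∀ s : Finset (Fin k), s.card ≤ (s.biUnion t).card := by
    intro s
    set T := s.biUnion t with hT
    by_cases hTe : T = ∅
    · -- then s must be empty
      rcases s.eq_empty_or_nonempty with rfl | ⟨a, ha⟩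
      · simp
      · exfalso
        -- some entry of row a is at least 1/k
        have hsum : ∑ _a' : Fin k, (1 / (k : ℝ)) ≤ ∑ a', S a a' := by
          rw [hrow a, Finset.sum_const, Finset.card_univ, Fintype.card_fin, nsmul_eq_mul]
          rw [mul_one_div, div_self (ne_of_gt hkR)]
        have hne : (Finset.univ : Finset (Fin k)).Nonempty := ⟨a, Finset.mem_univ a⟩
        obtain ⟨a', -, ha'⟩ := Finset.exists_le_of_sum_le hne hsum
        have hk1 : (1:ℝ) ≤ k := by exact_mod_cast hk
        have hmem' : a' ∈ t a := by
          simp only [ht, Finset.mem_filter, Finset.mem_univ, true_and]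
          refine le_trans ?_ ha'
          rw [div_le_div_iff₀ hk2 hkR]
          nlinarith
        have : a' ∈ T := Finset.mem_biUnion.2 ⟨a, ha, hmem'⟩
        rw [hTe] at this
        exact absurd this (Finset.notMem_empty a')
    · have hT1 : 1 ≤ T.card := Finset.card_pos.2 (Finset.nonempty_of_ne_empty hTe)
      -- real inequality
      have key : (s.card : ℝ) ≤ T.card + (s.card * (k - T.card)) / (k : ℝ) ^ 2 := by
        have hsplit : (s.card : ℝ) = ∑ a ∈ s, ∑ a', S a a' := by
          simp [hrow]
        have h1 : ∑ a ∈ s, ∑ a' ∈ T, S a a' ≤ (T.card : ℝ) := by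
          calc ∑ a ∈ s, ∑ a' ∈ T, S a a'
              ≤ ∑ a : Fin k, ∑ a' ∈ T, S a a' := by
                apply Finset.sum_le_sum_of_subset_of_nonneg (Finset.subset_univ s)
                intro i _ _
                exact Finset.sum_nonneg fun j _ => h0 i j
            _ = ∑ a' ∈ T, ∑ a : Fin k, S a a' := Finset.sum_comm
            _ = ∑ a' ∈ T, (1 : ℝ) := by
                apply Finset.sum_congr rfl; intro a' _; exact hcol a'
            _ = T.card := by simp
        have h2 : ∑ a ∈ s, ∑ a' ∈ Tᶜ, S a a' ≤ (s.card : ℝ) * (Tᶜ.card) * (1 / (k:ℝ)^2) := by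
          calc ∑ a ∈ s, ∑ a' ∈ Tᶜ, S a a'
              ≤ ∑ a ∈ s, ∑ _a' ∈ Tᶜ, (1 / (k:ℝ)^2) := by
                apply Finset.sum_le_sum
                intro a ha
                apply Finset.sum_le_sum
                intro a' ha'
                by_contra hcon
                push_neg at hcon
                have : a' ∈ T := Finset.mem_biUnion.2 ⟨a, ha, by
                  simp only [ht, Finset.mem_filter, Finset.mem_univ, true_and]
                  exact le_of_lt hcon⟩
                exact (Finset.mem_compl.1 ha') this
            _ = (s.card : ℝ) * (Tᶜ.card) * (1 / (k:ℝ)^2) := by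
                simp [Finset.sum_const, mul_assoc]
        have hTc : (Tᶜ.card : ℝ) = (k : ℝ) - T.card := by
          have := Finset.card_compl T
          rw [this]
          have hle : T.card ≤ Fintype.card (Fin k) := Finset.card_le_univ T
          rw [Fintype.card_fin] at hle ⊢
          push_cast [Nat.cast_sub hle]
          ring
        calc (s.card : ℝ) = ∑ a ∈ s, ∑ a', S a a' := hsplit
          _ = ∑ a ∈ s, (∑ a' ∈ T, S a a' + ∑ a' ∈ Tᶜ, S a a') := by
              apply Finset.sum_congr rfl; intro a _
              rw [Finset.sum_add_sum_compl]
          _ = (∑ a ∈ s, ∑ a' ∈ T, S a a') + ∑ a ∈ s, ∑ a' ∈ Tᶜ, S a a' :=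
              Finset.sum_add_distrib
          _ ≤ T.card + (s.card : ℝ) * (Tᶜ.card) * (1 / (k:ℝ)^2) := by
              exact add_le_add h1 h2
          _ = T.card + (s.card * (k - T.card)) / (k : ℝ) ^ 2 := by
              rw [hTc]; ring
      -- now conclude s.card ≤ T.card
      have hsk : (s.card : ℝ) ≤ k := by
        exact_mod_cast (Finset.card_le_univ s).trans_eq (by simp)
      have hTk : (T.card : ℝ) ≥ 1 := by exact_mod_cast hT1
      have hfrac : (s.card : ℝ) * (k - T.card) / (k : ℝ) ^ 2 < 1 := by
        rw [div_lt_one hk2]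
        have hTk' : (k : ℝ) - T.card ≤ (k : ℝ) - 1 := by linarith
        have hs0 : (0 : ℝ) ≤ s.card := Nat.cast_nonneg _
        have hkm1 : (0:ℝ) ≤ (k:ℝ) - 1 := by
          have : (1:ℝ) ≤ k := by exact_mod_cast hk
          linarith
        nlinarith
      have : (s.card : ℝ) < T.card + 1 := by linarith
      have : s.card < T.card + 1 := by exact_mod_cast this
      omega
  obtain ⟨f, hfinj, hf⟩ := (Finset.all_card_le_biUnion_card_iff_exists_injective t).1 hall
  refine ⟨Equiv.ofBijective f (Finite.injective_iff_bijective.1 hfinj), fun a => ?_⟩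
  have := hf a
  simp only [ht, Finset.mem_filter, Finset.mem_univ, true_and] at this
  exact this

theorem perm_dist_le_ds_dist (k : ℕ) (hk : 0 < k)
    (B B₀ : Matrix (Fin k) (Fin k) ℝ)
    (hBs : Bᵀ = B) (hB₀s : B₀ᵀ = B₀)
    (hB0 : ∀ a b, 0 ≤ B a b) (hB₀0 : ∀ a b, 0 ≤ B₀ a b) :
    (1 / (k : ℝ) ^ 2) *
        sInf {r : ℝ | ∃ π : Equiv.Perm (Fin k),
          r = ∑ i, ∑ j, (B (π i) (π j) - B₀ i j) ^ 2}
      ≤ (k : ℝ) ^ 4 *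
        sInf {r : ℝ | ∃ S : Matrix (Fin k) (Fin k) ℝ,
          (∀ a b, 0 ≤ S a b) ∧ (∀ a, ∑ b, S a b = 1) ∧ (∀ b, ∑ a, S a b = 1) ∧
          r = (1 / (k : ℝ) ^ 2) *
                ∑ a, ∑ a', ∑ b, ∑ b', (B a b - B₀ a' b') ^ 2 * S a a' * S b b'} := by
  classical
  have hkR : (0 : ℝ) < (k : ℝ) := by exact_mod_cast hk
  have hk2 : (0 : ℝ) < (k : ℝ) ^ 2 := by positivity
  have hk4 : (0 : ℝ) < (k : ℝ) ^ 4 := by positivity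
  set P := {r : ℝ | ∃ π : Equiv.Perm (Fin k),
          r = ∑ i, ∑ j, (B (π i) (π j) - B₀ i j) ^ 2} with hP
  set T := {r : ℝ | ∃ S : Matrix (Fin k) (Fin k) ℝ,
          (∀ a b, 0 ≤ S a b) ∧ (∀ a, ∑ b, S a b = 1) ∧ (∀ b, ∑ a, S a b = 1) ∧
          r = (1 / (k : ℝ) ^ 2) *
                ∑ a, ∑ a', ∑ b, ∑ b', (B a b - B₀ a' b') ^ 2 * S a a' * S b b'} with hTdef
  have hPbdd : BddBelow P := by
    refine ⟨0, fun r hr => ?_⟩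
    obtain ⟨π, rfl⟩ := hr
    positivity
  have hTne : T.Nonempty := by
    refine ⟨_, (fun _ _ => 1 / (k:ℝ)), fun a b => by positivity, ?_, ?_, rfl⟩
    · intro a; simp [Finset.sum_const]; field_simp
    · intro b; simp [Finset.sum_const]; field_simp
  rw [← div_le_iff₀' hk4]
  apply le_csInf hTne
  rintro r ⟨S, h0, hrow, hcol, rfl⟩
  rw [div_le_iff₀' hk4]
  obtain ⟨σ, hσ⟩ := exists_good_perm k hk S h0 hrow hcol
  -- the candidate permutation value
  have hmem : (∑ a, ∑ b, (B a b - B₀ (σ a) (σ b)) ^ 2) ∈ P := by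
    refine ⟨σ⁻¹, ?_⟩
    rw [← Equiv.sum_comp σ (fun i => ∑ j, (B (σ⁻¹ i) (σ⁻¹ j) - B₀ i j) ^ 2)]
    apply Finset.sum_congr rfl; intro a _
    rw [← Equiv.sum_comp σ (fun j => (B (σ⁻¹ (σ a)) (σ⁻¹ j) - B₀ (σ a) j) ^ 2)]
    simp
  have hInfP : sInf P ≤ ∑ a, ∑ b, (B a b - B₀ (σ a) (σ b)) ^ 2 := csInf_le hPbdd hmem
  -- pointwise bound using S entries
  have hbound : ∑ a, ∑ b, (B a b - B₀ (σ a) (σ b)) ^ 2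
      ≤ (k:ℝ)^4 * ∑ a, ∑ b, (B a b - B₀ (σ a) (σ b)) ^ 2 * S a (σ a) * S b (σ b) := by
    rw [Finset.mul_sum]
    apply Finset.sum_le_sum
    intro a _
    rw [Finset.mul_sum]
    apply Finset.sum_le_sum
    intro b _
    have h1 := hσ a
    have h2 := hσ b
    have hx : (0:ℝ) ≤ (B a b - B₀ (σ a) (σ b)) ^ 2 := sq_nonneg _
    have hSS : 1 / (k:ℝ)^4 ≤ S a (σ a) * S b (σ b) := by
      have : (1 / (k:ℝ)^2) * (1 / (k:ℝ)^2) ≤ S a (σ a) * S b (σ b) := by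
        apply mul_le_mul h1 h2 (by positivity) (le_trans (by positivity) h1)
      calc (1:ℝ) / (k:ℝ)^4 = (1 / (k:ℝ)^2) * (1 / (k:ℝ)^2) := by ring
        _ ≤ _ := this
    calc (B a b - B₀ (σ a) (σ b)) ^ 2
        = (k:ℝ)^4 * ((B a b - B₀ (σ a) (σ b)) ^ 2 * (1 / (k:ℝ)^4)) := by
          field_simp
      _ ≤ (k:ℝ)^4 * ((B a b - B₀ (σ a) (σ b)) ^ 2 * (S a (σ a) * S b (σ b))) := by
          apply mul_le_mul_of_nonneg_left _ (le_of_lt hk4)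
          exact mul_le_mul_of_nonneg_left hSS hx
      _ = (k:ℝ)^4 * ((B a b - B₀ (σ a) (σ b)) ^ 2 * S a (σ a) * S b (σ b)) := by ring
  -- selected terms are below the full sum
  have hsel : ∑ a, ∑ b, (B a b - B₀ (σ a) (σ b)) ^ 2 * S a (σ a) * S b (σ b)
      ≤ ∑ a, ∑ a', ∑ b, ∑ b', (B a b - B₀ a' b') ^ 2 * S a a' * S b b' := by
    apply Finset.sum_le_sum
    intro a _
    have step1 : ∑ b, (B a b - B₀ (σ a) (σ b)) ^ 2 * S a (σ a) * S b (σ b)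
        ≤ ∑ b, ∑ b', (B a b - B₀ (σ a) b') ^ 2 * S a (σ a) * S b b' := by
      apply Finset.sum_le_sum
      intro b _
      apply Finset.single_le_sum (f := fun b' => (B a b - B₀ (σ a) b') ^ 2 * S a (σ a) * S b b')
        (fun b' _ => by
          have := h0 a (σ a); have := h0 b b'; positivity) (Finset.mem_univ (σ b))
    refine le_trans step1 ?_
    apply Finset.single_le_sum
      (f := fun a' => ∑ b, ∑ b', (B a b - B₀ a' b') ^ 2 * S a a' * S b b')
      (fun a' _ => by
        apply Finset.sum_nonneg; intro b _
        apply Finset.sum_nonneg; intro b' _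
        have := h0 a a'; have := h0 b b'; positivity) (Finset.mem_univ (σ a))
  calc (1 / (k : ℝ) ^ 2) * sInf P
      ≤ (1 / (k : ℝ) ^ 2) * ((k:ℝ)^4 * ∑ a, ∑ a', ∑ b, ∑ b',
          (B a b - B₀ a' b') ^ 2 * S a a' * S b b') := by
        apply mul_le_mul_of_nonneg_left _ (by positivity)
        refine hInfP.trans (hbound.trans ?_)
        apply mul_le_mul_of_nonneg_left hsel (le_of_lt hk4)
    _ = (k:ℝ)^4 * ((1 / (k : ℝ) ^ 2) * ∑ a, ∑ a', ∑ b, ∑ b',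
          (B a b - B₀ a' b') ^ 2 * S a a' * S b b') := by ring
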